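/- Let K be a locally compact Hausdorff space that is not σ-compact but possesses a dense σ-compact subset (i.e., K is of class K_II). Then there is no standard frame in C₀(K): there exist no index set J, no family (x_j)_{j∈J} of elements of C₀(K), and no constants 0 < c₁ ≤ c₂ such that for every x ∈ C₀(K) the family of functions (|x_j|²·|x|²)_{j∈J} is summable in the norm of C₀(K) and its sum S satisfies c₁·|x(t)|² ≤ S(t) ≤ c₂·|x(t)|² for all t ∈ K. -/

import Mathlib

open ZeroAtInfty Set Filter Function

universe u

section Aux

variable {K : Type*} [TopologicalSpace K]

/-- Evaluation at a point as a continuous linear map on `C₀(K, ℂ)`. -/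
noncomputable def evalC0Clm (t : K) : C₀(K, ℂ) →L[ℂ] ℂ :=
  LinearMap.mkContinuous
    { toFun := fun f => f t
      map_add' := fun _ _ => rfl
      map_smul' := fun _ _ => rfl } 1
    (by
      intro f
      simp only [one_mul, LinearMap.coe_mk, AddHom.coe_mk]
      calc ‖f t‖ = ‖f.toBCF t‖ := rfl
        _ ≤ ‖f.toBCF‖ := BoundedContinuousFunction.norm_coe_le_norm _ _
        _ = ‖f‖ := ZeroAtInftyContinuousMap.norm_toBCF_eq_norm)

lemma c0_tsum_apply {J : Type u} {f : J → C₀(K, ℂ)} (hf : Summable f) (t : K) :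
    (∑' j, f j) t = ∑' j, f j t :=
  (evalC0Clm t).map_tsum hf

lemma exists_c0_one_on [LocallyCompactSpace K] [T2Space K]
    {C : Set K} (hC : IsCompact C) :
    ∃ v : C₀(K, ℂ), ∀ t ∈ C, v t = 1 := by
  obtain ⟨f, hf1, -, hfc, -⟩ :=
    exists_continuous_one_zero_of_isCompact hC isClosed_empty (disjoint_empty _)
  have hcs : HasCompactSupport (fun t => ((f t : ℝ) : ℂ)) := by
    apply hfc.comp_left (g := fun r : ℝ => (r : ℂ))
    simp
  refine ⟨⟨⟨fun t => (f t : ℂ), by fun_prop⟩, hcs.is_zero_at_infty⟩, fun t ht => ?_⟩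
  simp [hf1 ht]

end Aux

set_option synthInstance.maxHeartbeats 1000000 in
/-- Let `K` be a locally compact Hausdorff space which is not `σ`-compact but has a dense
`σ`-compact subset (class `K_II`). Then there is no standard frame in `C₀(K)`: there are no
index set `J`, family `(x j)` in `C₀(K)` and constants `0 < c₁ ≤ c₂` such that for every
`x ∈ C₀(K)` the family of functions `(|x_j|² · |x|²)` (realized in the `C*`-algebra
`C₀(K, ℂ)` as `star (x j) * x j * (star x * x)`) is summable in the norm of `C₀(K)` and
its sum `S` satisfies `c₁ · |x t|² ≤ S t ≤ c₂ · |x t|²` for all `t ∈ K`. -/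
theorem no_standard_frame_of_KII
    (K : Type*) [TopologicalSpace K] [LocallyCompactSpace K] [T2Space K]
    (hK : ¬ SigmaCompactSpace K)
    (hdense : ∃ D : Set K, IsSigmaCompact D ∧ Dense D) :
    ¬ ∃ (J : Type u) (x : J → C₀(K, ℂ)) (c₁ c₂ : ℝ), 0 < c₁ ∧ c₁ ≤ c₂ ∧
        ∀ v : C₀(K, ℂ),
          Summable (fun j : J => star (x j) * x j * (star v * v)) ∧
          ∀ t : K,
            c₁ * ‖v t‖ ^ 2 ≤ ((∑' j : J, star (x j) * x j * (star v * v)) t).re ∧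
            ((∑' j : J, star (x j) * x j * (star v * v)) t).re ≤ c₂ * ‖v t‖ ^ 2 := by
  rintro ⟨J, x, c₁, c₂, hc₁, hc₁₂, h⟩
  obtain ⟨D, ⟨S, hScomp, hSunion⟩, hD⟩ := hdense
  set f : C₀(K, ℂ) → J → C₀(K, ℂ) :=
    fun v j => star (x j) * x j * (star v * v) with hf
  have hfapp : ∀ (v : C₀(K, ℂ)) (j : J) (t : K),
      f v j t = star (x j t) * x j t * (star (v t) * v t) := by
    intro v j t
    simp [hf]
  -- Claim A: at every point some frame element is nonzero.
  have claimA : ∀ t : K, ∃ j : J, x j t ≠ 0 := by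
    intro t
    by_contra hno
    push_neg at hno
    obtain ⟨v, hv⟩ := exists_c0_one_on (isCompact_singleton (x := t))
    have hvt : v t = 1 := hv t rfl
    obtain ⟨hsum, hb⟩ := h v
    have h1 := (hb t).1
    have hz : (∑' j : J, f v j) t = 0 := by
      rw [c0_tsum_apply hsum]
      have : ∀ j, f v j t = 0 := by
        intro j
        rw [hfapp, hno j]
        ring
      exact (tsum_congr this).trans tsum_zero
    rw [hf] at hz
    rw [hz] at h1
    simp only [Complex.zero_re, hvt] at h1
    norm_num at h1
    linarith
  -- Claim B: only countably many frame elements are nonzero.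
  have claimB : {j : J | x j ≠ 0}.Countable := by
    choose v hv using fun n : ℕ => exists_c0_one_on (hScomp n)
    have hcnt : ∀ n : ℕ, (support (f (v n))).Countable := fun n =>
      (h (v n)).1.countable_support
    have hsub : {j : J | x j ≠ 0} ⊆ ⋃ n : ℕ, support (f (v n)) := by
      intro j hj
      by_contra hjn
      simp only [mem_iUnion, not_exists, mem_support, not_not] at hjn
      apply hj
      ext t
      show x j t = 0
      have hx0 : ∀ t ∈ D, x j t = 0 := by
        intro t ht
        rw [← hSunion] at ht
        obtain ⟨n, hn⟩ := mem_iUnion.mp ht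
        have := congrFun (congrArg DFunLike.coe (hjn n)) t
        rw [hfapp] at this
        simp only [ZeroAtInftyContinuousMap.coe_zero, Pi.zero_apply] at this
        rw [hv n t hn] at this
        simp only [star_one, mul_one] at this
        have := mul_self_eq_zero (a := ‖x j t‖) |>.mp ?_
        · exact norm_eq_zero.mp this
        · have h2 : (starRingEnd ℂ) (x j t) * x j t = 0 := this
          have := congrArg (‖·‖) h2
          simpa [← sq, sq_eq_zero_iff] using this
      have hcont : Continuous fun t => x j t := map_continuous (x j)
      exact congrFun (Continuous.ext_on hD hcont continuous_const hx0) t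
    exact (Set.countable_iUnion hcnt).mono hsub
  -- Claim C: K is σ-compact, contradiction.
  apply hK
  rw [← isSigmaCompact_univ_iff]
  have : Countable {j : J // x j ≠ 0} := claimB.to_subtype
  have hcover : (univ : Set K) =
      ⋃ j : {j : J // x j ≠ 0}, ⋃ m : ℕ, {t : K | 1 / (m + 1 : ℝ) ≤ ‖x j.1 t‖} := by
    apply Subset.antisymm
    · intro t _
      obtain ⟨j, hj⟩ := claimA t
      have hpos : 0 < ‖x j t‖ := norm_pos_iff.mpr hj
      obtain ⟨m, hm⟩ := exists_nat_one_div_lt hpos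
      have hjne : x j ≠ 0 := by
        intro h0
        apply hj
        rw [h0]
        rfl
      exact mem_iUnion.mpr ⟨⟨j, hjne⟩, mem_iUnion.mpr ⟨m, hm.le⟩⟩
    · exact subset_univ _
  rw [hcover]
  apply isSigmaCompact_iUnion
  intro j
  apply isSigmaCompact_iUnion_of_isCompact
  intro m
  -- each level set is compact
  have hεpos : (0 : ℝ) < 1 / (m + 1 : ℝ) := by positivity
  have hmem : (fun t => x j.1 t) ⁻¹' Metric.ball (0 : ℂ) (1 / (m + 1 : ℝ)) ∈ cocompact K :=
    (zero_at_infty (x j.1)) (Metric.ball_mem_nhds 0 hεpos)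
  obtain ⟨C, hCcomp, hCsub⟩ := mem_cocompact.mp hmem
  have hclosed : IsClosed {t : K | 1 / (m + 1 : ℝ) ≤ ‖x j.1 t‖} :=
    isClosed_le continuous_const ((map_continuous (x j.1)).norm)
  apply hCcomp.of_isClosed_subset hclosed
  intro t ht
  by_contra htC
  have := hCsub htC
  simp only [mem_preimage, Metric.mem_ball, dist_zero_right] at this
  exact absurd ht (by simp only [mem_setOf_eq, not_le]; exact this)
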